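/- Let f_1, ..., f_s be formal power series with integer coefficients. If for infinitely many prime numbers p the reductions of f_1, ..., f_s modulo p are linearly dependent over the field F_p, then f_1, ..., f_s are linearly dependent over Q. -/

import Mathlib

open Matrix


/-- Lemma 7.2: if the reductions modulo `p` of integer power series `f_1, …, f_s` are
linearly dependent over `𝔽_p` for infinitely many primes `p`, then `f_1, …, f_s` are
linearly dependent over `ℚ`. -/
theorem linear_dependence_from_infinitely_many_primes (s : ℕ)
    (f : Fin s → PowerSeries ℤ)
    (h : {p : ℕ | p.Prime ∧ ∃ c : Fin s → ZMod p, c ≠ 0 ∧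
        ∑ i, c i • PowerSeries.map (Int.castRingHom (ZMod p)) (f i) = 0}.Infinite) :
    ∃ c : Fin s → ℚ, c ≠ 0 ∧
      ∑ i, c i • PowerSeries.map (Int.castRingHom ℚ) (f i) = 0 := by
  by_contra hcon
  push_neg at hcon
  set a : ℕ → Fin s → ℤ := fun n i => PowerSeries.coeff n (f i) with ha
  -- independence over ℚ, coefficientwise
  have hker : ∀ c : Fin s → ℚ, c ≠ 0 → ∃ n : ℕ, ∑ i, (a n i : ℚ) * c i ≠ 0 := by
    intro c hc
    have := hcon c hc
    contrapose! this
    ext n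
    simpa [PowerSeries.coeff_map, mul_comm, ha] using this n
  -- matrices of coefficients
  set Aq : (N : ℕ) → Matrix (Fin N) (Fin s) ℚ :=
    fun N => Matrix.of (fun n i => (a (n : ℕ) i : ℚ)) with hAq
  set K : ℕ → Submodule ℚ (Fin s → ℚ) :=
    fun N => LinearMap.ker (Matrix.mulVecLin (Aq N)) with hK
  have hKmem : ∀ (N : ℕ) (c : Fin s → ℚ),
      c ∈ K N ↔ ∀ n : Fin N, ∑ i, (a (n : ℕ) i : ℚ) * c i = 0 := by
    intro N c
    simp [hK, LinearMap.mem_ker, Matrix.mulVecLin_apply, funext_iff, Matrix.mulVec,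
      dotProduct, hAq]
  have hKmono : ∀ {M N : ℕ}, M ≤ N → K N ≤ K M := by
    intro M N hMN c hc
    rw [hKmem] at hc ⊢
    intro n
    exact hc ⟨(n : ℕ), lt_of_lt_of_le n.2 hMN⟩
  -- minimize the rank of the kernels
  set r : ℕ := sInf (Set.range fun N => Module.finrank ℚ (K N)) with hr
  obtain ⟨N₀, hN₀⟩ : r ∈ Set.range fun N => Module.finrank ℚ (K N) :=
    Nat.sInf_mem (Set.range_nonempty _)
  have hmin : ∀ N, r ≤ Module.finrank ℚ (K N) := fun N => Nat.sInf_le ⟨N, rfl⟩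
  have hbot : K N₀ = ⊥ := by
    rw [eq_bot_iff]
    intro c hc
    simp only [Submodule.mem_bot]
    by_contra hc0
    obtain ⟨n, hn⟩ := hker c hc0
    have h1 : K (max N₀ (n + 1)) ≤ K N₀ := hKmono (le_max_left _ _)
    have h2 : c ∉ K (max N₀ (n + 1)) := by
      rw [hKmem]
      push_neg
      exact ⟨⟨n, lt_of_lt_of_le (Nat.lt_succ_self n) (le_max_right _ _)⟩, hn⟩
    have hlt : K (max N₀ (n + 1)) < K N₀ := lt_of_le_of_ne h1 (fun he => h2 (he ▸ hc))
    have hlt2 := Submodule.finrank_lt_finrank_of_lt hlt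
    have hN₀' : Module.finrank ℚ (K N₀) = r := hN₀
    rw [hN₀'] at hlt2
    exact absurd (hmin (max N₀ (n + 1))) (not_le_of_gt hlt2)
  -- Gram matrix
  set A : Matrix (Fin N₀) (Fin s) ℤ := Matrix.of (fun n i => a (n : ℕ) i) with hA
  set G : Matrix (Fin s) (Fin s) ℤ := Aᵀ * A with hG
  have hAqmap : Aq N₀ = A.map (Int.cast : ℤ → ℚ) := by
    ext n i; simp [hAq, hA, Matrix.map_apply]
  have hGq : G.map (Int.cast : ℤ → ℚ) = (Aq N₀)ᵀ * (Aq N₀) := by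
    rw [hG, hAqmap]
    ext i j
    simp [Matrix.mul_apply, Matrix.map_apply, Matrix.transpose_apply]
  have hdet : G.det ≠ 0 := by
    intro h0
    have hdq : (G.map (Int.cast : ℤ → ℚ)).det = 0 := by
      rw [show G.map (Int.cast : ℤ → ℚ) = (Int.castRingHom ℚ).mapMatrix G from rfl,
        ← RingHom.map_det, h0, map_zero]
    obtain ⟨v, hv0, hv⟩ := Matrix.exists_mulVec_eq_zero_iff.mpr hdq
    -- the Gram relation forces Aq N₀ *ᵥ v = 0
    have hdot : (Aq N₀).mulVec v ⬝ᵥ (Aq N₀).mulVec v = 0 := by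
      have h1 : (Aq N₀)ᵀ.mulVec ((Aq N₀).mulVec v) = 0 := by
        rw [Matrix.mulVec_mulVec, ← hGq, hv]
      have h2 : v ⬝ᵥ (Aq N₀)ᵀ.mulVec ((Aq N₀).mulVec v)
          = (Aq N₀).mulVec v ⬝ᵥ (Aq N₀).mulVec v := by
        rw [Matrix.dotProduct_mulVec, Matrix.vecMul_transpose]
      rw [← h2, h1, dotProduct_zero]
    have hAv : (Aq N₀).mulVec v = 0 := by
      funext n
      have hnn : ∀ m ∈ Finset.univ, (0:ℚ) ≤ (Aq N₀).mulVec v m * (Aq N₀).mulVec v m :=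
        fun m _ => mul_self_nonneg _
      have := (Finset.sum_eq_zero_iff_of_nonneg hnn).mp hdot n (Finset.mem_univ n)
      have := mul_self_eq_zero.mp this
      simpa using this
    have : v ∈ K N₀ := by
      simp [hK, LinearMap.mem_ker, Matrix.mulVecLin_apply, hAv]
    rw [hbot, Submodule.mem_bot] at this
    exact hv0 this
  -- finitely many primes divide the determinant
  have hbadfin : {p : ℕ | (p : ℤ) ∣ G.det}.Finite := by
    apply Set.Finite.subset (Set.finite_Iic G.det.natAbs)
    intro p hp
    have hdvd : p ∣ G.det.natAbs := by
      have := Int.natAbs_dvd_natAbs.mpr hp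
      simpa using this
    exact Nat.le_of_dvd (Int.natAbs_pos.mpr hdet) hdvd
  obtain ⟨p, hpmem⟩ := (h.diff hbadfin).nonempty
  obtain ⟨⟨hp, c, hc0, hsum⟩, hpd⟩ := hpmem
  simp only [Set.mem_setOf_eq] at hpd
  haveI : Fact p.Prime := ⟨hp⟩
  set Ap : Matrix (Fin N₀) (Fin s) (ZMod p) := A.map (Int.cast : ℤ → ZMod p) with hAp
  set Gp : Matrix (Fin s) (Fin s) (ZMod p) := G.map (Int.cast : ℤ → ZMod p) with hGp
  have hGpAp : Gp = Apᵀ * Ap := by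
    rw [hGp, hG, hAp]
    ext i j
    simp [Matrix.mul_apply, Matrix.map_apply, Matrix.transpose_apply]
  have hdetp : Gp.det ≠ 0 := by
    rw [hGp, show G.map (Int.cast : ℤ → ZMod p) = (Int.castRingHom (ZMod p)).mapMatrix G
      from rfl, ← RingHom.map_det]
    simp only [eq_intCast, ne_eq, ZMod.intCast_zmod_eq_zero_iff_dvd]
    exact hpd
  -- the dependence mod p contradicts invertibility of the Gram matrix
  have hApc : Ap.mulVec c = 0 := by
    funext n
    have := congrArg (PowerSeries.coeff (R := ZMod p) (n : ℕ)) hsum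
    simp only [map_sum, _root_.map_smul, PowerSeries.coeff_map, map_zero, smul_eq_mul] at this
    simp only [Matrix.mulVec, dotProduct, hAp, Matrix.map_apply, hA, Matrix.of_apply,
      Pi.zero_apply]
    rw [← this]
    exact Finset.sum_congr rfl fun i _ => by
      simp [ha, mul_comm, Int.castRingHom]
  have hGpc : Gp.mulVec c = 0 := by
    rw [hGpAp, ← Matrix.mulVec_mulVec, hApc, Matrix.mulVec_zero]
  exact hdetp (Matrix.exists_mulVec_eq_zero_iff.mp ⟨c, hc0, hGpc⟩)
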